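/- Assume the UB setup. Then d ≤ min{wt(f) + 1, wt(h)}, where the weights are computed in R_n. -/

import Mathlib

open Polynomial

noncomputable section

/-- `R_n = F_2[x]/(x^n - 1)`. -/
abbrev Rq (n : ℕ) : Type :=
  Polynomial (ZMod 2) ⧸ Ideal.span ({X ^ n - 1} : Set (Polynomial (ZMod 2)))

/-- The canonical projection `F_2[x] → R_n`. -/
abbrev mkq (n : ℕ) : Polynomial (ZMod 2) →+* Rq n :=
  Ideal.Quotient.mk (Ideal.span ({X ^ n - 1} : Set (Polynomial (ZMod 2))))

/-- The unique polynomial representative of degree `< n` of an element of `R_n`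
(obtained by reducing any lift modulo the monic polynomial `x^n - 1`). -/
def rep (n : ℕ) (z : Rq n) : Polynomial (ZMod 2) :=
  Function.surjInv Ideal.Quotient.mk_surjective z %ₘ (X ^ n - 1)

/-- Hamming weight of an element of `R_n`: the number of nonzero coefficients of its
unique representative of degree `< n`. -/
def wtq (n : ℕ) (z : Rq n) : ℕ := (rep n z).support.card

lemma xn_monic {n : ℕ} (hn : 1 ≤ n) : (X ^ n - 1 : Polynomial (ZMod 2)).Monic := by
  simpa using Polynomial.monic_X_pow_sub_C (1 : ZMod 2) (by omega)

lemma xn_degree {n : ℕ} (hn : 1 ≤ n) :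
    (X ^ n - 1 : Polynomial (ZMod 2)).degree = n := by
  simpa using Polynomial.degree_X_pow_sub_C (by omega : 0 < n) (1 : ZMod 2)

lemma mkq_xn (n : ℕ) : mkq n (X ^ n - 1) = 0 := by
  rw [Ideal.Quotient.eq_zero_iff_mem]
  exact Ideal.subset_span rfl

lemma mkq_eq_iff {n : ℕ} {p q : Polynomial (ZMod 2)} :
    mkq n p = mkq n q ↔ (X ^ n - 1 : Polynomial (ZMod 2)) ∣ (p - q) := by
  rw [Ideal.Quotient.eq, Ideal.mem_span_singleton]

lemma rep_mkq {n : ℕ} (hn : 1 ≤ n) (p : Polynomial (ZMod 2)) (hp : p.degree < n) :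
    rep n (mkq n p) = p := by
  have hmonic := xn_monic hn
  have hq1 : mkq n (Function.surjInv Ideal.Quotient.mk_surjective (mkq n p)) = mkq n p :=
    Function.surjInv_eq _ _
  have h2 : mkq n (rep n (mkq n p)) = mkq n p := by
    rw [rep, Polynomial.modByMonic_eq_sub_mul_div _ (X ^ n - 1), map_sub, map_mul, mkq_xn, zero_mul,
      sub_zero, hq1]
  have hdvd : (X ^ n - 1 : Polynomial (ZMod 2)) ∣ (rep n (mkq n p) - p) := mkq_eq_iff.mp h2
  have hdeglt : (rep n (mkq n p) - p).degree < (X ^ n - 1 : Polynomial (ZMod 2)).degree := by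
    rw [xn_degree hn]
    refine lt_of_le_of_lt (Polynomial.degree_sub_le _ _) (max_lt ?_ hp)
    have := Polynomial.degree_modByMonic_lt
      (Function.surjInv Ideal.Quotient.mk_surjective (mkq n p)) hmonic
    rwa [xn_degree hn] at this
  have := Polynomial.eq_zero_of_dvd_of_degree_lt hdvd hdeglt
  exact sub_eq_zero.mp this

lemma wtq_zero {n : ℕ} (hn : 1 ≤ n) : wtq n 0 = 0 := by
  have h0 : (0 : Rq n) = mkq n 0 := by simp
  rw [wtq, h0, rep_mkq hn 0 (by simp only [Polynomial.degree_zero]; exact WithBot.bot_lt_coe n)]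
  simp

lemma wtq_one {n : ℕ} (hn : 1 ≤ n) : wtq n 1 = 1 := by
  have h0 : (1 : Rq n) = mkq n 1 := by simp
  have hd : (1 : Polynomial (ZMod 2)).degree < n := by
    rw [Polynomial.degree_one]
    exact_mod_cast Nat.pos_of_ne_zero (by omega)
  rw [wtq, h0, rep_mkq hn 1 hd]
  rw [← Polynomial.C_1, Polynomial.support_C (by norm_num)]
  simp

lemma rev_pow (a : Polynomial (ZMod 2)) (t : ℕ) : (a ^ t).reverse = a.reverse ^ t := by
  induction t with
  | zero => simp [Polynomial.reverse, Polynomial.reflect_one]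
  | succ k ih => rw [pow_succ, Polynomial.reverse_mul_of_domain, ih, pow_succ]

lemma xn_reverse {n : ℕ} (hn : 1 ≤ n) :
    (X ^ n - 1 : Polynomial (ZMod 2)).reverse = X ^ n - 1 := by
  have h2 : (X ^ n - 1 : Polynomial (ZMod 2)) = X ^ n + 1 := by
    have h1 : (-1 : ZMod 2) = 1 := by decide
    rw [sub_eq_add_neg, ← Polynomial.C_1, ← Polynomial.C_neg, h1]
  rw [h2, Polynomial.reverse]
  have hdeg : (X ^ n + 1 : Polynomial (ZMod 2)).natDegree = n := by
    have := xn_degree hn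
    rw [h2] at this
    exact Polynomial.natDegree_eq_of_degree_eq_some this
  rw [hdeg, Polynomial.reflect_add, Polynomial.reflect_one, ← Polynomial.C_1]
  rw [Polynomial.C_1, Polynomial.reflect_monomial]
  simp [add_comm]

/-- The `Z`-distance of `UB(a, ℓ)` (with `t = 2^ℓ`):
`d_Z = min { wt(u) + wt(v) : (u,v) ∈ ker H_Z \ rs H_X }`, where
`ker H_Z = {(u,v) : b*·u + a*·v = 0}` and `rs H_X = {(a·s, b·s)}`, `b = a^t`. -/
def dZv (n : ℕ) (a : Polynomial (ZMod 2)) (t : ℕ) : ℕ :=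
  sInf {m : ℕ | ∃ w : Rq n × Rq n,
    (mkq n ((a ^ t).reverse) * w.1 + mkq n a.reverse * w.2 = 0) ∧
    (¬ ∃ s : Rq n, w = (mkq n a * s, (mkq n a) ^ t * s)) ∧
    m = wtq n w.1 + wtq n w.2}

/-- The `X`-distance of `UB(a, ℓ)` (with `t = 2^ℓ`):
`d_X = min { wt(u) + wt(v) : (u,v) ∈ ker H_X \ rs H_Z }`, where
`ker H_X = {(u,v) : a·u + b·v = 0}` and `rs H_Z = {(b*·s, a*·s)}`, `b = a^t`. -/
def dXv (n : ℕ) (a : Polynomial (ZMod 2)) (t : ℕ) : ℕ :=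
  sInf {m : ℕ | ∃ w : Rq n × Rq n,
    (mkq n a * w.1 + (mkq n a) ^ t * w.2 = 0) ∧
    (¬ ∃ s : Rq n, w = (mkq n ((a ^ t).reverse) * s, mkq n a.reverse * s)) ∧
    m = wtq n w.1 + wtq n w.2}

/-- in the UB setup, `d ≤ min{wt(f) + 1, wt(h)}` with `f = a^{t-1}` in `R_n`. -/
theorem stmt12 (n : ℕ) (hn : 1 ≤ n) (a h : Polynomial (ZMod 2))
    (hah : a * h = X ^ n - 1) (hr : 0 < a.natDegree) (ℓ t : ℕ) (hℓ : 1 ≤ ℓ)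
    (ht : t = 2 ^ ℓ) :
    min (dXv n a t) (dZv n a t) ≤
      min (wtq n ((mkq n a) ^ (t - 1)) + 1) (wtq n (mkq n h)) := by
  have ha0 : a ≠ 0 := fun h0 => by simp [h0] at hr
  have hxn0 : (X ^ n - 1 : Polynomial (ZMod 2)) ≠ 0 := (xn_monic hn).ne_zero
  have hh0 : h ≠ 0 := fun h0 => hxn0 (by rw [← hah, h0, mul_zero])
  have hnd : (X ^ n - 1 : Polynomial (ZMod 2)).natDegree = n := by
    simpa using Polynomial.natDegree_X_pow_sub_C (n := n) (r := (1 : ZMod 2))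
  have hsum : a.natDegree + h.natDegree = n := by
    rw [← hnd, ← hah, Polynomial.natDegree_mul ha0 hh0]
  have hhlt : h.natDegree < n := by omega
  have hmkh0 : mkq n h ≠ 0 := by
    intro h0
    have hdvd : (X ^ n - 1 : Polynomial (ZMod 2)) ∣ h := by
      rw [← Ideal.mem_span_singleton]
      exact Ideal.Quotient.eq_zero_iff_mem.mp h0
    refine hh0 (Polynomial.eq_zero_of_dvd_of_degree_lt hdvd ?_)
    rw [xn_degree hn]
    exact lt_of_le_of_lt Polynomial.degree_le_natDegree (by exact_mod_cast hhlt)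
  have ht2 : 2 ≤ t := ht ▸ (by calc 2 = 2 ^ 1 := by norm_num
                                 _ ≤ 2 ^ ℓ := Nat.pow_le_pow_right (by norm_num) hℓ)
  have ht1 : t - 1 + 1 = t := by omega
  have hpp : ∀ x : Rq n, x + x = 0 := by
    intro x
    have h11 : (1 : Rq n) + 1 = 0 := by
      rw [← map_one (mkq n), ← map_add]
      have h110 : (1 + 1 : ZMod 2) = 0 := by decide
      have : (1 + 1 : Polynomial (ZMod 2)) = 0 := by
        rw [← Polynomial.C_1, ← Polynomial.C_add, h110, Polynomial.C_0]
      rw [this, map_zero]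
    calc x + x = (1 + 1) * x := by rw [add_mul, one_mul]
      _ = 0 := by rw [h11, zero_mul]
  have hX : dXv n a t ≤ min (wtq n ((mkq n a) ^ (t - 1)) + 1) (wtq n (mkq n h)) := by
    apply le_min
    · -- witness (a^(t-1), 1)
      apply Nat.sInf_le
      refine ⟨((mkq n a) ^ (t - 1), 1), ?_, ?_, ?_⟩
      · show mkq n a * (mkq n a) ^ (t - 1) + (mkq n a) ^ t * 1 = 0
        rw [mul_one, ← pow_succ', ht1]
        exact hpp _
      · rintro ⟨s, hs⟩
        have hs2 : (1 : Rq n) = mkq n a.reverse * s := congrArg Prod.snd hs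
        have key : mkq n h.reverse = 0 := by
          calc mkq n h.reverse = mkq n h.reverse * (mkq n a.reverse * s) := by
                rw [← hs2, mul_one]
            _ = mkq n ((a * h).reverse) * s := by
                rw [Polynomial.reverse_mul_of_domain, map_mul]; ring
            _ = 0 := by rw [hah, xn_reverse hn, mkq_xn, zero_mul]
        have hr0 : h.reverse ≠ 0 := by rwa [Ne, Polynomial.reverse_eq_zero]
        have hdvd : (X ^ n - 1 : Polynomial (ZMod 2)) ∣ h.reverse := by
          rw [← Ideal.mem_span_singleton]
          exact Ideal.Quotient.eq_zero_iff_mem.mp key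
        refine hr0 (Polynomial.eq_zero_of_dvd_of_degree_lt hdvd ?_)
        rw [xn_degree hn]
        refine lt_of_le_of_lt Polynomial.degree_le_natDegree ?_
        exact_mod_cast lt_of_le_of_lt h.reverse_natDegree_le hhlt
      · show wtq n ((mkq n a) ^ (t - 1)) + 1
            = wtq n ((mkq n a) ^ (t - 1)) + wtq n 1
        rw [wtq_one hn]
    · -- witness (h, 0)
      apply Nat.sInf_le
      refine ⟨(mkq n h, 0), ?_, ?_, ?_⟩
      · show mkq n a * mkq n h + (mkq n a) ^ t * 0 = 0
        rw [mul_zero, add_zero, ← map_mul, hah, mkq_xn]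
      · rintro ⟨s, hs⟩
        have hs1 : mkq n h = mkq n ((a ^ t).reverse) * s := congrArg Prod.fst hs
        have hs2 : (0 : Rq n) = mkq n a.reverse * s := congrArg Prod.snd hs
        refine hmkh0 ?_
        calc mkq n h = mkq n ((a ^ t).reverse) * s := hs1
          _ = (mkq n a.reverse) ^ t * s := by rw [rev_pow, map_pow]
          _ = (mkq n a.reverse) ^ (t - 1) * (mkq n a.reverse * s) := by
              rw [← mul_assoc, ← pow_succ, ht1]
          _ = 0 := by rw [← hs2, mul_zero]
      · show wtq n (mkq n h) = wtq n (mkq n h) + wtq n 0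
        rw [wtq_zero hn, add_zero]
  exact le_trans (min_le_left _ _) hX


end
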